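/- Let S be a finite bichromatic point set in the plane in general position (distinct x and y coordinates), let p₁,…,p₅ ∈ S be five points of the same color, and let B be any axis-aligned box with nonempty interior. Then the five points can be repositioned inside B (keeping their color, maintaining general position) so that in the resulting point set the point p₁ does not participate, i.e., no point of the opposite color spans an empty axis-aligned rectangle with p₁. -/

import Mathlib

open Classical

noncomputable section

abbrev Pt := ℝ × ℝ

/-- An axis-aligned box in the plane. -/
structure Box where
  x0 : ℝ
  x1 : ℝ
  y0 : ℝ
  y1 : ℝ
  hx : x0 < x1
  hy : y0 < y1

/-- The cross of a box: the union of its vertical and horizontal strips. -/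
def Box.cross (B : Box) : Set Pt :=
  {p | (B.x0 ≤ p.1 ∧ p.1 ≤ B.x1) ∨ (B.y0 ≤ p.2 ∧ p.2 ≤ B.y1)}

/-- The four open quadrants of a box. -/
def Box.NE (B : Box) : Set Pt := {p | B.x1 < p.1 ∧ B.y1 < p.2}
def Box.NW (B : Box) : Set Pt := {p | p.1 < B.x0 ∧ B.y1 < p.2}
def Box.SE (B : Box) : Set Pt := {p | B.x1 < p.1 ∧ p.2 < B.y0}
def Box.SW (B : Box) : Set Pt := {p | p.1 < B.x0 ∧ p.2 < B.y0}

/-- Membership in the open interior of a box. -/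
def Box.inside (B : Box) (p : Pt) : Prop :=
  B.x0 < p.1 ∧ p.1 < B.x1 ∧ B.y0 < p.2 ∧ p.2 < B.y1

/-- Membership in the closed box. -/
def Box.memClosed (B : Box) (p : Pt) : Prop :=
  B.x0 ≤ p.1 ∧ p.1 ≤ B.x1 ∧ B.y0 ≤ p.2 ∧ p.2 ≤ B.y1

/-- `p` avoids the boundary lines of the box and of its quadrants. -/
def Box.offBoundary (B : Box) (p : Pt) : Prop :=
  p.1 ≠ B.x0 ∧ p.1 ≠ B.x1 ∧ p.2 ≠ B.y0 ∧ p.2 ≠ B.y1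

/-- Minimal points of `T` towards the SW corner of the NE quadrant
(the usual minimal points under coordinatewise domination). -/
def neMinSet (T : Set Pt) : Set Pt :=
  {p ∈ T | ∀ q ∈ T, (q.1 ≤ p.1 ∧ q.2 ≤ p.2) → q = p}

/-- Minimal points of `T` towards the SE corner of the NW quadrant. -/
def nwMinSet (T : Set Pt) : Set Pt :=
  {p ∈ T | ∀ q ∈ T, (p.1 ≤ q.1 ∧ q.2 ≤ p.2) → q = p}

/-- Minimal points of `T` towards the NW corner of the SE quadrant. -/
def seMinSet (T : Set Pt) : Set Pt :=
  {p ∈ T | ∀ q ∈ T, (q.1 ≤ p.1 ∧ p.2 ≤ q.2) → q = p}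

/-- Minimal points of `T` towards the NE corner of the SW quadrant
(the usual maximal points under coordinatewise domination). -/
def swMinSet (T : Set Pt) : Set Pt :=
  {p ∈ T | ∀ q ∈ T, (p.1 ≤ q.1 ∧ p.2 ≤ q.2) → q = p}

/-- `z` lies in the open axis-aligned rectangle spanned by `p` and `q`. -/
def openRect (p q z : Pt) : Prop :=
  min p.1 q.1 < z.1 ∧ z.1 < max p.1 q.1 ∧ min p.2 q.2 < z.2 ∧ z.2 < max p.2 q.2

/-- `p` and `q` see each other in `S`: the open rectangle they span is empty of `S`. -/
def sees (S : Set Pt) (p q : Pt) : Prop := ∀ z ∈ S, ¬ openRect p q z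

/-- `p` participates in `S`: some point of the opposite color sees `p`. -/
def participates (S : Set Pt) (color : Pt → Bool) (p : Pt) : Prop :=
  ∃ q ∈ S, color q ≠ color p ∧ sees S p q

/-- All points of `S` in the cross of `B` have color `c`. -/
def crossSafeFor (S : Set Pt) (color : Pt → Bool) (c : Bool) (B : Box) : Prop :=
  ∀ p ∈ S, p ∈ B.cross → color p = c

/-- `B` is `c`-safe for `S`: `c`-cross-safe and the four directional minimal
sets of the quadrants only contain points of color `c`. -/
def safeFor (S : Set Pt) (color : Pt → Bool) (c : Bool) (B : Box) : Prop :=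
  crossSafeFor S color c B ∧
  (∀ p ∈ neMinSet (S ∩ B.NE), color p = c) ∧
  (∀ p ∈ nwMinSet (S ∩ B.NW), color p = c) ∧
  (∀ p ∈ seMinSet (S ∩ B.SE), color p = c) ∧
  (∀ p ∈ swMinSet (S ∩ B.SW), color p = c)

/-- `B` is safe: red-safe (`true`) or blue-safe (`false`). -/
def isSafe (S : Set Pt) (color : Pt → Bool) (B : Box) : Prop :=
  safeFor S color true B ∨ safeFor S color false B

/-- General position: pairwise distinct x-coordinates and y-coordinates. -/
def genPos (S : Set Pt) : Prop :=
  ∀ p ∈ S, ∀ q ∈ S, p ≠ q → p.1 ≠ q.1 ∧ p.2 ≠ q.2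

lemma exists_avoid (F : Finset ℝ) {a b : ℝ} (h : a < b) : ∃ c, a < c ∧ c < b ∧ c ∉ F := by
  obtain ⟨c, hc⟩ := ((Set.Ioo_infinite h).diff F.finite_toSet).nonempty
  exact ⟨c, hc.1.1, hc.1.2, fun hm => hc.2 (by simpa using hm)⟩

set_option maxHeartbeats 0 in
/-- Five same-colored points can be repositioned inside any box so that the first
one does not participate in the resulting point set. -/
theorem stmt3 (S : Finset Pt) (color : Pt → Bool) (hgp : genPos (↑S : Set Pt))
    (p : Fin 5 → Pt) (hinj : Function.Injective p) (hmem : ∀ i, p i ∈ S)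
    (hcol : ∀ i, color (p i) = color (p 0)) (B : Box) :
    ∃ q : Fin 5 → Pt, Function.Injective q ∧ (∀ i, B.inside (q i)) ∧
      genPos (((↑S : Set Pt) \ Set.range p) ∪ Set.range q) ∧
      ¬ participates (((↑S : Set Pt) \ Set.range p) ∪ Set.range q)
          (fun z => if z ∈ Set.range q then color (p 0) else color z) (q 0) := by
  classical
  set X : Finset ℝ := S.image Prod.fst with hX
  set Y : Finset ℝ := S.image Prod.snd with hY
  obtain ⟨a0, ha0l, ha0r, ha0X⟩ := exists_avoid X B.hx
  obtain ⟨b0, hb0l, hb0r, hb0Y⟩ := exists_avoid Y B.hy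
  -- right barrier u, left barrier l, top barrier t, bottom barrier d
  have hFune : (insert B.x1 ((S.filter (fun z => a0 < z.1)).image Prod.fst)).Nonempty :=
    ⟨B.x1, Finset.mem_insert_self _ _⟩
  set u := (insert B.x1 ((S.filter (fun z => a0 < z.1)).image Prod.fst)).min' hFune with hu
  have hau : a0 < u := by
    apply (Finset.lt_min'_iff _ _).2
    intro y hy
    rcases Finset.mem_insert.1 hy with h | h
    · exact h ▸ ha0r
    · obtain ⟨z, hz, rfl⟩ := Finset.mem_image.1 h
      exact (Finset.mem_filter.1 hz).2
  have huB : u ≤ B.x1 := Finset.min'_le _ _ (Finset.mem_insert_self _ _)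
  have hule : ∀ z ∈ S, a0 < z.1 → u ≤ z.1 := fun z hz h =>
    Finset.min'_le _ _ (Finset.mem_insert_of_mem
      (Finset.mem_image_of_mem _ (Finset.mem_filter.2 ⟨hz, h⟩)))
  have hFlne : (insert B.x0 ((S.filter (fun z => z.1 < a0)).image Prod.fst)).Nonempty :=
    ⟨B.x0, Finset.mem_insert_self _ _⟩
  set l := (insert B.x0 ((S.filter (fun z => z.1 < a0)).image Prod.fst)).max' hFlne with hl
  have hla : l < a0 := by
    apply (Finset.max'_lt_iff _ _).2
    intro y hy
    rcases Finset.mem_insert.1 hy with h | h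
    · exact h ▸ ha0l
    · obtain ⟨z, hz, rfl⟩ := Finset.mem_image.1 h
      exact (Finset.mem_filter.1 hz).2
  have hlB : B.x0 ≤ l := Finset.le_max' _ _ (Finset.mem_insert_self _ _)
  have hlle : ∀ z ∈ S, z.1 < a0 → z.1 ≤ l := fun z hz h =>
    Finset.le_max' _ _ (Finset.mem_insert_of_mem
      (Finset.mem_image_of_mem _ (Finset.mem_filter.2 ⟨hz, h⟩)))
  have hFtne : (insert B.y1 ((S.filter (fun z => b0 < z.2)).image Prod.snd)).Nonempty :=
    ⟨B.y1, Finset.mem_insert_self _ _⟩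
  set t := (insert B.y1 ((S.filter (fun z => b0 < z.2)).image Prod.snd)).min' hFtne with ht
  have hbt : b0 < t := by
    apply (Finset.lt_min'_iff _ _).2
    intro y hy
    rcases Finset.mem_insert.1 hy with h | h
    · exact h ▸ hb0r
    · obtain ⟨z, hz, rfl⟩ := Finset.mem_image.1 h
      exact (Finset.mem_filter.1 hz).2
  have htB : t ≤ B.y1 := Finset.min'_le _ _ (Finset.mem_insert_self _ _)
  have htle : ∀ z ∈ S, b0 < z.2 → t ≤ z.2 := fun z hz h =>
    Finset.min'_le _ _ (Finset.mem_insert_of_mem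
      (Finset.mem_image_of_mem _ (Finset.mem_filter.2 ⟨hz, h⟩)))
  have hFdne : (insert B.y0 ((S.filter (fun z => z.2 < b0)).image Prod.snd)).Nonempty :=
    ⟨B.y0, Finset.mem_insert_self _ _⟩
  set d := (insert B.y0 ((S.filter (fun z => z.2 < b0)).image Prod.snd)).max' hFdne with hd
  have hdb : d < b0 := by
    apply (Finset.max'_lt_iff _ _).2
    intro y hy
    rcases Finset.mem_insert.1 hy with h | h
    · exact h ▸ hb0l
    · obtain ⟨z, hz, rfl⟩ := Finset.mem_image.1 h
      exact (Finset.mem_filter.1 hz).2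
  have hdB : B.y0 ≤ d := Finset.le_max' _ _ (Finset.mem_insert_self _ _)
  have hdle : ∀ z ∈ S, z.2 < b0 → z.2 ≤ d := fun z hz h =>
    Finset.le_max' _ _ (Finset.mem_insert_of_mem
      (Finset.mem_image_of_mem _ (Finset.mem_filter.2 ⟨hz, h⟩)))
  -- pick the shield coordinates
  obtain ⟨a1, ha1l, ha1r, ha1X⟩ := exists_avoid X hau
  obtain ⟨a3, ha3l, ha3r, ha3X'⟩ := exists_avoid (insert a1 X) hau
  obtain ⟨a2, ha2l, ha2r, ha2X⟩ := exists_avoid X hla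
  obtain ⟨a4, ha4l, ha4r, ha4X'⟩ := exists_avoid (insert a2 X) hla
  obtain ⟨b1, hb1l, hb1r, hb1Y⟩ := exists_avoid Y hbt
  obtain ⟨b2, hb2l, hb2r, hb2Y'⟩ := exists_avoid (insert b1 Y) hbt
  obtain ⟨b3, hb3l, hb3r, hb3Y⟩ := exists_avoid Y hdb
  obtain ⟨b4, hb4l, hb4r, hb4Y'⟩ := exists_avoid (insert b3 Y) hdb
  have ha3X : a3 ∉ X := fun h => ha3X' (Finset.mem_insert_of_mem h)
  have ha4X : a4 ∉ X := fun h => ha4X' (Finset.mem_insert_of_mem h)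
  have hb2Y : b2 ∉ Y := fun h => hb2Y' (Finset.mem_insert_of_mem h)
  have hb4Y : b4 ∉ Y := fun h => hb4Y' (Finset.mem_insert_of_mem h)
  have ha31 : a3 ≠ a1 := fun h => ha3X' (h ▸ Finset.mem_insert_self _ _)
  have ha42 : a4 ≠ a2 := fun h => ha4X' (h ▸ Finset.mem_insert_self _ _)
  have hb21 : b2 ≠ b1 := fun h => hb2Y' (h ▸ Finset.mem_insert_self _ _)
  have hb43 : b4 ≠ b3 := fun h => hb4Y' (h ▸ Finset.mem_insert_self _ _)
  have hqX : ∀ i : Fin 5, ((![(a0, b0), (a1, b1), (a2, b2), (a3, b3), (a4, b4)] : Fin 5 → Pt) i).1 ∉ X := by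
    intro i
    fin_cases i
    · exact ha0X
    · exact ha1X
    · exact ha2X
    · exact ha3X
    · exact ha4X
  have hqY : ∀ i : Fin 5, ((![(a0, b0), (a1, b1), (a2, b2), (a3, b3), (a4, b4)] : Fin 5 → Pt) i).2 ∉ Y := by
    intro i
    fin_cases i
    · exact hb0Y
    · exact hb1Y
    · exact hb2Y
    · exact hb3Y
    · exact hb4Y
  have hSx : ∀ z ∈ S, ∀ i : Fin 5, z.1 ≠ ((![(a0, b0), (a1, b1), (a2, b2), (a3, b3), (a4, b4)] : Fin 5 → Pt) i).1 := fun z hz i h =>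
    hqX i (h ▸ Finset.mem_image_of_mem Prod.fst hz)
  have hSy : ∀ z ∈ S, ∀ i : Fin 5, z.2 ≠ ((![(a0, b0), (a1, b1), (a2, b2), (a3, b3), (a4, b4)] : Fin 5 → Pt) i).2 := fun z hz i h =>
    hqY i (h ▸ Finset.mem_image_of_mem Prod.snd hz)
  have hqgp : ∀ i j : Fin 5, i ≠ j →
      ((![(a0, b0), (a1, b1), (a2, b2), (a3, b3), (a4, b4)] : Fin 5 → Pt) i).1 ≠ ((![(a0, b0), (a1, b1), (a2, b2), (a3, b3), (a4, b4)] : Fin 5 → Pt) j).1 ∧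
      ((![(a0, b0), (a1, b1), (a2, b2), (a3, b3), (a4, b4)] : Fin 5 → Pt) i).2 ≠ ((![(a0, b0), (a1, b1), (a2, b2), (a3, b3), (a4, b4)] : Fin 5 → Pt) j).2 := by
    intro i j hij
    (fin_cases i <;> fin_cases j)
    · exact absurd rfl hij
    · exact ⟨ne_of_lt ha1l, ne_of_lt hb1l⟩
    · exact ⟨ne_of_gt ha2r, ne_of_lt hb2l⟩
    · exact ⟨ne_of_lt ha3l, ne_of_gt hb3r⟩
    · exact ⟨ne_of_gt ha4r, ne_of_gt hb4r⟩
    · exact ⟨(ne_of_lt ha1l).symm, (ne_of_lt hb1l).symm⟩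
    · exact absurd rfl hij
    · exact ⟨ne_of_gt (lt_trans ha2r ha1l), hb21.symm⟩
    · exact ⟨ha31.symm, ne_of_gt (lt_trans hb3r hb1l)⟩
    · exact ⟨ne_of_gt (lt_trans ha4r ha1l), ne_of_gt (lt_trans hb4r hb1l)⟩
    · exact ⟨(ne_of_gt ha2r).symm, (ne_of_lt hb2l).symm⟩
    · exact ⟨(ne_of_gt (lt_trans ha2r ha1l)).symm, (hb21.symm).symm⟩
    · exact absurd rfl hij
    · exact ⟨ne_of_lt (lt_trans ha2r ha3l), ne_of_gt (lt_trans hb3r hb2l)⟩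
    · exact ⟨ha42.symm, ne_of_gt (lt_trans hb4r hb2l)⟩
    · exact ⟨(ne_of_lt ha3l).symm, (ne_of_gt hb3r).symm⟩
    · exact ⟨(ha31.symm).symm, (ne_of_gt (lt_trans hb3r hb1l)).symm⟩
    · exact ⟨(ne_of_lt (lt_trans ha2r ha3l)).symm, (ne_of_gt (lt_trans hb3r hb2l)).symm⟩
    · exact absurd rfl hij
    · exact ⟨ne_of_gt (lt_trans ha4r ha3l), hb43.symm⟩
    · exact ⟨(ne_of_gt ha4r).symm, (ne_of_gt hb4r).symm⟩
    · exact ⟨(ne_of_gt (lt_trans ha4r ha1l)).symm, (ne_of_gt (lt_trans hb4r hb1l)).symm⟩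
    · exact ⟨(ha42.symm).symm, (ne_of_gt (lt_trans hb4r hb2l)).symm⟩
    · exact ⟨(ne_of_gt (lt_trans ha4r ha3l)).symm, (hb43.symm).symm⟩
    · exact absurd rfl hij
  refine ⟨![(a0, b0), (a1, b1), (a2, b2), (a3, b3), (a4, b4)], ?_, ?_, ?_, ?_⟩
  · -- injectivity
    intro i j h
    by_contra hij
    exact (hqgp i j hij).1 (by rw [h])
  · -- inside the box
    intro i
    fin_cases i
    · exact ⟨ha0l, ha0r, hb0l, hb0r⟩
    · exact ⟨lt_trans ha0l ha1l, lt_of_lt_of_le ha1r huB,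
        lt_trans hb0l hb1l, lt_of_lt_of_le hb1r htB⟩
    · exact ⟨lt_of_le_of_lt hlB ha2l, lt_trans ha2r ha0r,
        lt_trans hb0l hb2l, lt_of_lt_of_le hb2r htB⟩
    · exact ⟨lt_trans ha0l ha3l, lt_of_lt_of_le ha3r huB,
        lt_of_le_of_lt hdB hb3l, lt_trans hb3r hb0r⟩
    · exact ⟨lt_of_le_of_lt hlB ha4l, lt_trans ha4r ha0r,
        lt_of_le_of_lt hdB hb4l, lt_trans hb4r hb0r⟩
  · -- general position
    intro z hz w hw hne
    rcases hz with hz | hz <;> rcases hw with hw | hw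
    · exact hgp z hz.1 w hw.1 hne
    · obtain ⟨i, rfl⟩ := hw
      exact ⟨hSx z (Finset.mem_coe.1 hz.1) i, hSy z (Finset.mem_coe.1 hz.1) i⟩
    · obtain ⟨i, rfl⟩ := hz
      exact ⟨(hSx w (Finset.mem_coe.1 hw.1) i).symm, (hSy w (Finset.mem_coe.1 hw.1) i).symm⟩
    · obtain ⟨i, rfl⟩ := hz
      obtain ⟨j, rfl⟩ := hw
      exact hqgp i j (fun h => hne (by rw [h]))
  · -- non-participation
    rintro ⟨z, hzU, hzc, hsee⟩
    have hq0 : (![(a0, b0), (a1, b1), (a2, b2), (a3, b3), (a4, b4)] : Fin 5 → Pt) 0 ∈ Set.range (![(a0, b0), (a1, b1), (a2, b2), (a3, b3), (a4, b4)] : Fin 5 → Pt) :=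
      Set.mem_range_self 0
    simp only [if_pos hq0] at hzc
    by_cases hzr : z ∈ Set.range (![(a0, b0), (a1, b1), (a2, b2), (a3, b3), (a4, b4)] : Fin 5 → Pt)
    · simp only [if_pos hzr] at hzc
      exact hzc rfl
    simp only [if_neg hzr] at hzc
    have hzS : z ∈ S := by
      rcases hzU with h | h
      · exact Finset.mem_coe.1 h.1
      · exact absurd h hzr
    have hzx : z.1 ≠ a0 := fun h => ha0X (h ▸ Finset.mem_image_of_mem Prod.fst hzS)
    have hzy : z.2 ≠ b0 := fun h => hb0Y (h ▸ Finset.mem_image_of_mem Prod.snd hzS)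
    rcases lt_or_gt_of_ne hzx with hx | hx <;> rcases lt_or_gt_of_ne hzy with hy | hy
    · -- z in SW quadrant : blocker (a4, b4)
      refine hsee ((![(a0, b0), (a1, b1), (a2, b2), (a3, b3), (a4, b4)] : Fin 5 → Pt) 4) (Set.mem_union_right _ (Set.mem_range_self 4)) ?_
      have h1 := hlle z hzS hx
      have h2 := hdle z hzS hy
      show openRect (a0, b0) z (a4, b4)
      exact ⟨min_lt_iff.2 (Or.inr (by linarith)), lt_max_iff.2 (Or.inl (by linarith)),
        min_lt_iff.2 (Or.inr (by linarith)), lt_max_iff.2 (Or.inl (by linarith))⟩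
    · -- z in NW quadrant : blocker (a2, b2)
      refine hsee ((![(a0, b0), (a1, b1), (a2, b2), (a3, b3), (a4, b4)] : Fin 5 → Pt) 2) (Set.mem_union_right _ (Set.mem_range_self 2)) ?_
      have h1 := hlle z hzS hx
      have h2 := htle z hzS hy
      show openRect (a0, b0) z (a2, b2)
      exact ⟨min_lt_iff.2 (Or.inr (by linarith)), lt_max_iff.2 (Or.inl (by linarith)),
        min_lt_iff.2 (Or.inl (by linarith)), lt_max_iff.2 (Or.inr (by linarith))⟩
    · -- z in SE quadrant : blocker (a3, b3)
      refine hsee ((![(a0, b0), (a1, b1), (a2, b2), (a3, b3), (a4, b4)] : Fin 5 → Pt) 3) (Set.mem_union_right _ (Set.mem_range_self 3)) ?_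
      have h1 := hule z hzS hx
      have h2 := hdle z hzS hy
      show openRect (a0, b0) z (a3, b3)
      exact ⟨min_lt_iff.2 (Or.inl (by linarith)), lt_max_iff.2 (Or.inr (by linarith)),
        min_lt_iff.2 (Or.inr (by linarith)), lt_max_iff.2 (Or.inl (by linarith))⟩
    · -- z in NE quadrant : blocker (a1, b1)
      refine hsee ((![(a0, b0), (a1, b1), (a2, b2), (a3, b3), (a4, b4)] : Fin 5 → Pt) 1) (Set.mem_union_right _ (Set.mem_range_self 1)) ?_
      have h1 := hule z hzS hx
      have h2 := htle z hzS hy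
      show openRect (a0, b0) z (a1, b1)
      exact ⟨min_lt_iff.2 (Or.inl (by linarith)), lt_max_iff.2 (Or.inr (by linarith)),
        min_lt_iff.2 (Or.inl (by linarith)), lt_max_iff.2 (Or.inr (by linarith))⟩
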